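/- Let $\Delta \in (0,1]$ and $\zeta(z) = z - \Delta\frac{1}{\pi}(\sqrt{1-(1-2z)^2} - (1-2z)\arccos(1-2z))$. Define the inverse cosine distance map $\omega : (1,\infty) \to (1,\infty)$ by $\omega(w) = \zeta(w^{-2})^{-1/2}$. Then $\omega$ is convex, and $\omega'(w) \leq 1$ for all $w \in (1,\infty)$. -/

import Mathlib

open Real

/-- The squared cosine distance map. -/
noncomputable def zeta (Δ z : ℝ) : ℝ :=
  z - Δ * (1 / π) *
    (Real.sqrt (1 - (1 - 2 * z) ^ 2) - (1 - 2 * z) * Real.arccos (1 - 2 * z))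

/-- The inverse cosine distance map `ω(w) = ζ(w⁻²)^{-1/2}`. -/
noncomputable def omegaMap (Δ w : ℝ) : ℝ := (Real.sqrt (zeta Δ ((w ^ 2)⁻¹)))⁻¹

open Set

lemma nn_left {f f' : ℝ → ℝ} {a b : ℝ}
    (hd : ∀ x, HasDerivAt f (f' x) x) (h0 : f a = 0)
    (hf' : ∀ x ∈ Ioo a b, 0 ≤ f' x) : ∀ x ∈ Icc a b, 0 ≤ f x := by
  intro x hx
  have hmono : MonotoneOn f (Icc a b) := by
    apply monotoneOn_of_deriv_nonneg (convex_Icc a b)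
    · exact fun y _ => (hd y).continuousAt.continuousWithinAt
    · exact fun y _ => (hd y).differentiableAt.differentiableWithinAt
    · intro y hy
      rw [interior_Icc] at hy
      rw [(hd y).deriv]
      exact hf' y hy
  have hab : a ≤ b := le_trans hx.1 hx.2
  have := hmono (left_mem_Icc.2 hab) hx hx.1
  rw [h0] at this; exact this

/-- helper: nonneg on [a,b] from f b = 0 and deriv nonpos -/

lemma nn_right {f f' : ℝ → ℝ} {a b : ℝ}
    (hd : ∀ x, HasDerivAt f (f' x) x) (h0 : f b = 0)
    (hf' : ∀ x ∈ Ioo a b, f' x ≤ 0) : ∀ x ∈ Icc a b, 0 ≤ f x := by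
  intro x hx
  have hmono : AntitoneOn f (Icc a b) := by
    apply antitoneOn_of_deriv_nonpos (convex_Icc a b)
    · exact fun y _ => (hd y).continuousAt.continuousWithinAt
    · exact fun y _ => (hd y).differentiableAt.differentiableWithinAt
    · intro y hy
      rw [interior_Icc] at hy
      rw [(hd y).deriv]
      exact hf' y hy
  have hab : a ≤ b := le_trans hx.1 hx.2
  have := hmono hx (right_mem_Icc.2 hab) hx.2
  rw [h0] at this; exact this

/-- L1 : sin θ - θ cos θ ≥ 0 on [0, π] -/

lemma L1 : ∀ θ ∈ Icc (0:ℝ) π, 0 ≤ sin θ - θ * cos θ := by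
  apply nn_left (f' := fun θ => θ * sin θ)
  · intro x
    have h1 := (Real.hasDerivAt_sin x).sub ((hasDerivAt_id' (𝕜:=ℝ) (x:=x)).mul (Real.hasDerivAt_cos x))
    refine h1.congr_deriv ?_; ring
  · simp
  · intro x hx
    exact mul_nonneg hx.1.le (Real.sin_nonneg_of_nonneg_of_le_pi hx.1.le (hx.2.le.trans le_rfl))

/-- L3a : 2 - 2 cos θ - θ sin θ ≥ 0 on [0, π] -/

lemma L3a : ∀ θ ∈ Icc (0:ℝ) π, 0 ≤ 2 - 2 * cos θ - θ * sin θ := by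
  apply nn_left (f' := fun θ => sin θ - θ * cos θ)
  · intro x
    have h1 := ((hasDerivAt_const x (2:ℝ)).sub ((hasDerivAt_const x (2:ℝ)).mul (Real.hasDerivAt_cos x))).sub
      ((hasDerivAt_id' (𝕜:=ℝ) (x:=x)).mul (Real.hasDerivAt_sin x))
    refine h1.congr_deriv ?_; ring
  · simp
  · intro x hx
    exact L1 x ⟨hx.1.le, hx.2.le⟩

/-- L3 : 2θ + θ cos θ - 3 sin θ ≥ 0 on [0, π] -/

lemma L3 : ∀ θ ∈ Icc (0:ℝ) π, 0 ≤ 2 * θ + θ * cos θ - 3 * sin θ := by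
  apply nn_left (f' := fun θ => 2 - 2 * cos θ - θ * sin θ)
  · intro x
    have h1 := (((hasDerivAt_const x (2:ℝ)).mul (hasDerivAt_id' (𝕜:=ℝ) (x:=x))).add
      ((hasDerivAt_id' (𝕜:=ℝ) (x:=x)).mul (Real.hasDerivAt_cos x))).sub
      ((hasDerivAt_const x (3:ℝ)).mul (Real.hasDerivAt_sin x))
    refine h1.congr_deriv ?_; ring
  · simp
  · intro x hx
    exact L3a x ⟨hx.1.le, hx.2.le⟩

/-- Lr : 3 sin t - sin t ^ 3 - 3 t cos t ≥ 0 on [0, π/2] -/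

lemma Lr : ∀ t ∈ Icc (0:ℝ) (π/2), 0 ≤ 3 * sin t - sin t ^ 3 - 3 * t * cos t := by
  apply nn_left (f' := fun t => 3 * sin t * (t - sin t * cos t))
  · intro x
    have h1 := (((hasDerivAt_const x (3:ℝ)).mul (Real.hasDerivAt_sin x)).sub
      ((Real.hasDerivAt_sin x).pow 3)).sub
      (((hasDerivAt_const x (3:ℝ)).mul (hasDerivAt_id' (𝕜:=ℝ) (x:=x))).mul (Real.hasDerivAt_cos x))
    refine h1.congr_deriv ?_
    push_cast
    simp only [Pi.mul_apply]
    ring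
  · simp
  · intro x hx
    have hs : 0 ≤ sin x := Real.sin_nonneg_of_nonneg_of_le_pi hx.1.le
      (hx.2.le.trans (by linarith [Real.pi_pos]))
    have h2 : sin x * cos x ≤ x := by
      have := Real.sin_le (by linarith [hx.1] : (0:ℝ) ≤ 2 * x)
      rw [Real.sin_two_mul] at this
      linarith
    nlinarith

/-- La : a(θ) = 3 sin²θ - 3θ sinθ + 2(1-cosθ)² ≥ 0 on [0, π] -/

lemma La : ∀ θ ∈ Icc (0:ℝ) π, 0 ≤ 3 * sin θ ^ 2 - 3 * θ * sin θ + 2 * (1 - cos θ) ^ 2 := by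
  intro θ hθ
  set t := θ / 2 with ht
  have htm : t ∈ Icc (0:ℝ) (π/2) := ⟨by linarith [hθ.1], by linarith [hθ.2]⟩
  have hs : sin θ = 2 * sin t * cos t := by
    rw [ht, ← Real.sin_two_mul]; congr 1; ring
  have hc : cos θ = 1 - 2 * sin t ^ 2 := by
    have := Real.sin_sq_eq_half_sub t
    have h2 : 2 * t = θ := by rw [ht]; ring
    rw [h2] at this; linarith
  have hsn : 0 ≤ sin t := Real.sin_nonneg_of_nonneg_of_le_pi htm.1
    (htm.2.trans (by linarith [Real.pi_pos]))
  have hr := Lr t htm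
  have hpy := Real.sin_sq_add_cos_sq t
  have key : 3 * sin θ ^ 2 - 3 * θ * sin θ + 2 * (1 - cos θ) ^ 2
      = 4 * sin t * (3 * sin t - sin t ^ 3 - 3 * t * cos t) := by
    rw [hs, hc, show θ = 2 * t by rw [ht]; ring]
    linear_combination (12 * sin t ^ 2) * hpy
  rw [key]
  exact mul_nonneg (by linarith) hr

/-- Lk : π(1-cosθ) + 2θcosθ - 2sinθ ≥ 0 on [π/2, π] -/

lemma Lk : ∀ θ ∈ Icc (π/2) π, 0 ≤ π * (1 - cos θ) + 2 * θ * cos θ - 2 * sin θ := by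
  apply nn_right (f' := fun θ => sin θ * (π - 2 * θ))
  · intro x
    have h1 := (((hasDerivAt_const x π).mul ((hasDerivAt_const x (1:ℝ)).sub (Real.hasDerivAt_cos x))).add
      (((hasDerivAt_const x (2:ℝ)).mul (hasDerivAt_id' (𝕜:=ℝ) (x:=x))).mul (Real.hasDerivAt_cos x))).sub
      ((hasDerivAt_const x (2:ℝ)).mul (Real.hasDerivAt_sin x))
    refine h1.congr_deriv ?_; simp only [Pi.mul_apply]; ring
  · simp [Real.cos_pi, Real.sin_pi]; ring
  · intro x hx
    have hs : 0 ≤ sin x := Real.sin_nonneg_of_nonneg_of_le_pi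
      (le_trans (by positivity) hx.1.le) hx.2.le
    have : π - 2 * x ≤ 0 := by linarith [hx.1]
    exact mul_nonpos_of_nonneg_of_nonpos hs this

/-- Lh : sinθ - θcosθ < (π/2)(1 - cosθ) on (0, π) -/

lemma Lh : ∀ θ ∈ Ioo (0:ℝ) π, sin θ - θ * cos θ < π / 2 * (1 - cos θ) := by
  intro θ hθ
  set h : ℝ → ℝ := fun θ => π / 2 * (1 - cos θ) - sin θ + θ * cos θ with hh
  have hd : ∀ x : ℝ, HasDerivAt h (sin x * (π / 2 - x)) x := by
    intro x
    have h1 := (((hasDerivAt_const x (π/2)).mul ((hasDerivAt_const x (1:ℝ)).sub (Real.hasDerivAt_cos x))).sub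
      (Real.hasDerivAt_sin x)).add ((hasDerivAt_id' (𝕜:=ℝ) (x:=x)).mul (Real.hasDerivAt_cos x))
    refine h1.congr_deriv ?_; ring
  have key : 0 < h θ := by
    rcases le_or_gt θ (π/2) with hle | hgt
    · have hmono : StrictMonoOn h (Icc 0 (π/2)) := by
        apply strictMonoOn_of_deriv_pos (convex_Icc 0 (π/2))
        · exact fun y _ => (hd y).continuousAt.continuousWithinAt
        · intro y hy
          rw [interior_Icc] at hy
          rw [(hd y).deriv]
          have : 0 < sin y := Real.sin_pos_of_pos_of_lt_pi hy.1 (by linarith [Real.pi_pos, hy.2])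
          have : 0 < π / 2 - y := by linarith [hy.2]
          positivity
      have := hmono (left_mem_Icc.2 (by positivity)) ⟨hθ.1.le, hle⟩ hθ.1
      simpa [hh] using this
    · have hanti : StrictAntiOn h (Icc (π/2) π) := by
        apply strictAntiOn_of_deriv_neg (convex_Icc (π/2) π)
        · exact fun y _ => (hd y).continuousAt.continuousWithinAt
        · intro y hy
          rw [interior_Icc] at hy
          rw [(hd y).deriv]
          have h1 : 0 < sin y := Real.sin_pos_of_pos_of_lt_pi (by linarith [Real.pi_pos, hy.1]) hy.2
          have h2 : π / 2 - y < 0 := by linarith [hy.1]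
          exact mul_neg_of_pos_of_neg h1 h2
      have := hanti ⟨hgt.le, hθ.2.le⟩ (right_mem_Icc.2 (by linarith [Real.pi_pos])) hθ.2
      have hπ : h π = 0 := by simp [hh, Real.sin_pi, Real.cos_pi]; ring
      rw [hπ] at this; exact this
  simp only [hh] at key; linarith

/-- Master inequality: Δπa + Δ²D ≥ 0 -/

lemma master {Δ θ : ℝ} (hΔ0 : 0 < Δ) (hΔ1 : Δ ≤ 1) (h0 : 0 < θ) (h1 : θ < π) :
    0 ≤ Δ * π * (3 * sin θ ^ 2 - 3 * θ * sin θ + 2 * (1 - cos θ) ^ 2)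
      + Δ ^ 2 * (6 * θ * sin θ * (θ - sin θ) - 4 * (1 - cos θ) * (sin θ - θ * cos θ)) := by
  have ha := La θ ⟨h0.le, h1.le⟩
  have hts : sin θ ≤ θ := Real.sin_le h0.le
  have hc : cos θ ≤ 1 := Real.cos_le_one θ
  have hs : 0 ≤ sin θ := Real.sin_nonneg_of_nonneg_of_le_pi h0.le h1.le
  rcases le_or_gt θ (π/2) with hle | hgt
  · -- Δπa + Δ²D = Δ(π-2θΔ)a + Δ²(2θa + D), 2θa + D = 4(1-c)(θ-s)
    have hπΔ : 0 ≤ π - 2 * θ * Δ := by nlinarith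
    nlinarith [mul_nonneg (mul_nonneg hΔ0.le hπΔ) ha,
      mul_nonneg (mul_nonneg (mul_nonneg (sq_nonneg Δ) (by linarith : (0:ℝ) ≤ 4)) (by linarith : (0:ℝ) ≤ 1 - cos θ)) (by linarith : (0:ℝ) ≤ θ - sin θ)]
  · -- Δπa + Δ²D = Δ(1-Δ)πa + Δ²(πa + D), πa + D = 3s(2θ-π)(θ-s) + 2(1-c)k
    have hk := Lk θ ⟨hgt.le, h1.le⟩
    have hπ := Real.pi_pos
    nlinarith [mul_nonneg (mul_nonneg hΔ0.le (by linarith : (0:ℝ) ≤ 1 - Δ)) (mul_nonneg hπ.le ha),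
      mul_nonneg (mul_nonneg (mul_nonneg (by positivity : (0:ℝ) ≤ 3 * sin θ) (by linarith : (0:ℝ) ≤ 2*θ - π)) (by linarith : (0:ℝ) ≤ θ - sin θ)) (sq_nonneg Δ),
      mul_nonneg (mul_nonneg (by linarith : (0:ℝ) ≤ 2 * (1 - cos θ)) hk) (sq_nonneg Δ)]

noncomputable def zeta1 (Δ z : ℝ) : ℝ := 1 - 2 * Δ / π * Real.arccos (1 - 2 * z)

lemma sqX_pos {z : ℝ} (hz : z ∈ Ioo (0:ℝ) 1) : 0 < 1 - (1 - 2 * z) ^ 2 := by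
  nlinarith [hz.1, hz.2]

lemma u_mem {z : ℝ} (hz : z ∈ Ioo (0:ℝ) 1) : -1 < 1 - 2 * z ∧ 1 - 2 * z < 1 := by
  constructor <;> nlinarith [hz.1, hz.2]

lemma zeta_hasDerivAt (Δ : ℝ) {z : ℝ} (hz : z ∈ Ioo (0:ℝ) 1) :
    HasDerivAt (zeta Δ) (zeta1 Δ z) z := by
  obtain ⟨hu1, hu2⟩ := u_mem hz
  have hX : 0 < 1 - (1 - 2 * z) ^ 2 := sqX_pos hz
  have hXs : 0 < Real.sqrt (1 - (1 - 2 * z) ^ 2) := Real.sqrt_pos.2 hX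
  have hinner : HasDerivAt (fun z : ℝ => 1 - 2 * z) (-2) z := by
    exact ((hasDerivAt_const z (1:ℝ)).sub ((hasDerivAt_const z (2:ℝ)).mul (hasDerivAt_id' (𝕜:=ℝ) (x:=z)))).congr_deriv (by ring)
  have hXd : HasDerivAt (fun z : ℝ => 1 - (1 - 2 * z) ^ 2) (4 * (1 - 2 * z)) z := by
    have := (hasDerivAt_const z (1:ℝ)).sub (hinner.pow 2)
    refine this.congr_deriv ?_; push_cast; ring
  have hsqrt : HasDerivAt (fun z : ℝ => Real.sqrt (1 - (1 - 2 * z) ^ 2))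
      (4 * (1 - 2 * z) / (2 * Real.sqrt (1 - (1 - 2 * z) ^ 2))) z :=
    hXd.sqrt (ne_of_gt hX)
  have harccos : HasDerivAt (fun z : ℝ => Real.arccos (1 - 2 * z))
      (-(1 / Real.sqrt (1 - (1 - 2 * z) ^ 2)) * (-2)) z :=
    (Real.hasDerivAt_arccos (ne_of_gt hu1) (ne_of_lt hu2)).comp (h₂ := Real.arccos) (h := fun z : ℝ => 1 - 2 * z) z hinner
  have hmul : HasDerivAt (fun z : ℝ => (1 - 2 * z) * Real.arccos (1 - 2 * z))
      ((-2) * Real.arccos (1 - 2 * z) + (1 - 2 * z) * (-(1 / Real.sqrt (1 - (1 - 2 * z) ^ 2)) * (-2))) z :=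
    hinner.mul harccos
  have htot := (hasDerivAt_id' (𝕜:=ℝ) (x:=z)).sub
    ((hasDerivAt_const z (Δ * (1 / π))).mul (hsqrt.sub hmul))
  have hzeta : zeta Δ = fun z => z - Δ * (1 / π) *
      (Real.sqrt (1 - (1 - 2 * z) ^ 2) - (1 - 2 * z) * Real.arccos (1 - 2 * z)) := rfl
  rw [hzeta, zeta1]
  refine htot.congr_deriv ?_
  have hπ := Real.pi_ne_zero
  field_simp
  ring

lemma theta_mem {z : ℝ} (hz : z ∈ Ioo (0:ℝ) 1) :
    Real.arccos (1 - 2 * z) ∈ Ioo (0:ℝ) π := by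
  obtain ⟨hu1, hu2⟩ := u_mem hz
  refine ⟨Real.arccos_pos.2 hu2, ?_⟩
  rw [Real.arccos_eq_pi_div_two_sub_arcsin]
  have := Real.neg_pi_div_two_lt_arcsin.2 hu1
  linarith

lemma cos_arccos_z {z : ℝ} (hz : z ∈ Ioo (0:ℝ) 1) :
    Real.cos (Real.arccos (1 - 2 * z)) = 1 - 2 * z := by
  obtain ⟨hu1, hu2⟩ := u_mem hz
  exact Real.cos_arccos hu1.le hu2.le

lemma zeta_eq_trig {Δ z : ℝ} (hz : z ∈ Ioo (0:ℝ) 1) :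
    zeta Δ z = z - Δ * (1 / π) * (Real.sin (Real.arccos (1 - 2 * z))
      - (1 - 2 * z) * Real.arccos (1 - 2 * z)) := by
  rw [zeta, Real.sin_arccos]

lemma zeta_pos {Δ z : ℝ} (hΔ : Δ ∈ Ioc (0:ℝ) 1) (hz : z ∈ Ioo (0:ℝ) 1) :
    0 < zeta Δ z := by
  rw [zeta_eq_trig hz]
  set θ := Real.arccos (1 - 2 * z) with hθdef
  have hθ := theta_mem hz
  have hcos := cos_arccos_z hz
  have h1 := L1 θ ⟨hθ.1.le, hθ.2.le⟩
  have h2 := Lh θ hθ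
  rw [hcos] at h1 h2
  have hπ := Real.pi_pos
  -- sin θ - (1-2z) θ ∈ [0, π z)
  have hg1 : 0 ≤ Real.sin θ - (1 - 2 * z) * θ := by linarith [h1]
  have hg2 : Real.sin θ - (1 - 2 * z) * θ < π * z := by nlinarith [h2]
  have hfrac : Δ * (1 / π) * (Real.sin θ - (1 - 2 * z) * θ) < z := by
    rcases eq_or_lt_of_le hg1 with he | hlt
    · rw [← he]; simpa using hz.1
    · have : Δ * (1 / π) * (Real.sin θ - (1 - 2 * z) * θ) ≤ 1 * (1 / π) * (Real.sin θ - (1 - 2 * z) * θ) := by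
        apply mul_le_mul_of_nonneg_right _ hg1
        have hπ2 : (0:ℝ) ≤ 1/π := by positivity
        exact mul_le_mul_of_nonneg_right hΔ.2 hπ2
      calc Δ * (1 / π) * (Real.sin θ - (1 - 2 * z) * θ)
          ≤ 1 * (1 / π) * (Real.sin θ - (1 - 2 * z) * θ) := this
        _ < z := by rw [one_mul]; rw [div_mul_eq_mul_div, one_mul, div_lt_iff₀ hπ]; nlinarith [hg2]
  linarith

lemma zeta1_le_one {Δ z : ℝ} (hΔ : Δ ∈ Ioc (0:ℝ) 1) (hz : z ∈ Ioo (0:ℝ) 1) :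
    zeta1 Δ z ≤ 1 := by
  rw [zeta1]
  have hθ := theta_mem hz
  have hπ := Real.pi_pos
  have h1 : (0:ℝ) ≤ 2 * Δ / π := by
    have := hΔ.1
    positivity
  have : 0 ≤ 2 * Δ / π * Real.arccos (1 - 2 * z) :=
    mul_nonneg h1 (Real.arccos_nonneg _)
  linarith

lemma zeta_ge {Δ z : ℝ} (hΔ : Δ ∈ Ioc (0:ℝ) 1) (hz : z ∈ Ioo (0:ℝ) 1) :
    z * (1 + 2 * zeta1 Δ z) ≤ 3 * zeta Δ z := by
  rw [zeta_eq_trig hz, zeta1]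
  set θ := Real.arccos (1 - 2 * z) with hθdef
  have hθ := theta_mem hz
  have hcos := cos_arccos_z hz
  have h3 := L3 θ ⟨hθ.1.le, hθ.2.le⟩
  rw [hcos] at h3
  have hπ := Real.pi_pos
  -- 3(sinθ - (1-2z)θ) ≤ 4θz
  have key : 3 * (Real.sin θ - (1 - 2 * z) * θ) ≤ 4 * θ * z := by nlinarith
  have hΔπ : 0 < Δ / π := div_pos hΔ.1 hπ
  -- 3ζ = 3z - (3Δ/π)(sinθ - (1-2z)θ) ≥ 3z - (Δ/π)·4θz = z(3 - 4Δθ/π) = z(1+2ζ₁)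
  have : Δ * (1 / π) * (3 * (Real.sin θ - (1 - 2 * z) * θ)) ≤ Δ * (1 / π) * (4 * θ * z) := by
    apply mul_le_mul_of_nonneg_left key
    have := hΔ.1
    positivity
  have hexp : z * (1 + 2 * (1 - 2 * Δ / π * θ)) = 3 * z - Δ * (1/π) * (4 * θ * z) := by
    field_simp; ring
  rw [hexp]
  linarith

noncomputable def omega1 (Δ w : ℝ) : ℝ :=
  zeta1 Δ ((w ^ 2)⁻¹) /
    (w ^ 3 * zeta Δ ((w ^ 2)⁻¹) * Real.sqrt (zeta Δ ((w ^ 2)⁻¹)))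

lemma zmem {w : ℝ} (hw : 1 < w) : (w ^ 2)⁻¹ ∈ Ioo (0:ℝ) 1 := by
  have h1 : (1:ℝ) < w ^ 2 := by nlinarith
  constructor
  · positivity
  · rw [inv_lt_one_iff₀]; right; exact h1

lemma inner_hasDerivAt {w : ℝ} (hw : 1 < w) :
    HasDerivAt (fun w : ℝ => (w ^ 2)⁻¹) (-(2 * w) / (w ^ 2) ^ 2) w := by
  have h := (hasDerivAt_pow 2 w).inv (by positivity : w ^ 2 ≠ 0)
  refine h.congr_deriv ?_
  push_cast; ring

lemma omega_hasDerivAt {Δ w : ℝ} (hΔ : Δ ∈ Ioc (0:ℝ) 1) (hw : 1 < w) :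
    HasDerivAt (omegaMap Δ) (omega1 Δ w) w := by
  have hz := zmem hw
  have hζ : 0 < zeta Δ ((w ^ 2)⁻¹) := zeta_pos hΔ hz
  have hsζ : 0 < Real.sqrt (zeta Δ ((w ^ 2)⁻¹)) := Real.sqrt_pos.2 hζ
  have hw0 : (0:ℝ) < w := lt_trans one_pos hw
  have hcomp : HasDerivAt (fun w : ℝ => zeta Δ ((w ^ 2)⁻¹))
      (zeta1 Δ ((w ^ 2)⁻¹) * (-(2 * w) / (w ^ 2) ^ 2)) w :=
    (zeta_hasDerivAt Δ hz).comp (h₂ := zeta Δ) (h := fun w : ℝ => (w ^ 2)⁻¹) w (inner_hasDerivAt hw)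
  have hsqrt := hcomp.sqrt (ne_of_gt hζ)
  have hfin := hsqrt.inv (ne_of_gt hsζ)
  have homega : omegaMap Δ = fun w => (Real.sqrt (zeta Δ ((w ^ 2)⁻¹)))⁻¹ := rfl
  rw [homega, omega1]
  refine hfin.congr_deriv ?_
  set S := Real.sqrt (zeta Δ ((w ^ 2)⁻¹)) with hS
  have hS2 : S ^ 2 = zeta Δ ((w ^ 2)⁻¹) := Real.sq_sqrt hζ.le
  rw [← hS2]
  field_simp

noncomputable def omega2 (Δ w : ℝ) : ℝ :=
  Real.sqrt (zeta Δ ((w ^ 2)⁻¹)) *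
    (3 * zeta1 Δ ((w ^ 2)⁻¹) ^ 2
      + 8 * Δ * zeta Δ ((w ^ 2)⁻¹) / (π * Real.sqrt (1 - (1 - 2 * (w ^ 2)⁻¹) ^ 2))
      - 3 * w ^ 2 * zeta Δ ((w ^ 2)⁻¹) * zeta1 Δ ((w ^ 2)⁻¹))
    / (w ^ 3 * zeta Δ ((w ^ 2)⁻¹) * Real.sqrt (zeta Δ ((w ^ 2)⁻¹))) ^ 2

lemma zeta1_hasDerivAt (Δ : ℝ) {z : ℝ} (hz : z ∈ Ioo (0:ℝ) 1) :
    HasDerivAt (zeta1 Δ) (-(4 * Δ) / (π * Real.sqrt (1 - (1 - 2 * z) ^ 2))) z := by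
  obtain ⟨hu1, hu2⟩ := u_mem hz
  have hX : 0 < 1 - (1 - 2 * z) ^ 2 := sqX_pos hz
  have hXs : 0 < Real.sqrt (1 - (1 - 2 * z) ^ 2) := Real.sqrt_pos.2 hX
  have hinner : HasDerivAt (fun z : ℝ => 1 - 2 * z) (-2) z := by
    exact ((hasDerivAt_const z (1:ℝ)).sub ((hasDerivAt_const z (2:ℝ)).mul (hasDerivAt_id' (𝕜:=ℝ) (x:=z)))).congr_deriv (by ring)
  have harccos : HasDerivAt (fun z : ℝ => Real.arccos (1 - 2 * z))
      (-(1 / Real.sqrt (1 - (1 - 2 * z) ^ 2)) * (-2)) z :=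
    (Real.hasDerivAt_arccos (ne_of_gt hu1) (ne_of_lt hu2)).comp (h₂ := Real.arccos) (h := fun z : ℝ => 1 - 2 * z) z hinner
  have h := (hasDerivAt_const z (1:ℝ)).sub ((hasDerivAt_const z (2 * Δ / π)).mul harccos)
  have hz1 : zeta1 Δ = fun z => 1 - 2 * Δ / π * Real.arccos (1 - 2 * z) := rfl
  rw [hz1]
  refine h.congr_deriv ?_
  have hπ := Real.pi_ne_zero
  field_simp
  ring

lemma omega1_hasDerivAt {Δ w : ℝ} (hΔ : Δ ∈ Ioc (0:ℝ) 1) (hw : 1 < w) :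
    HasDerivAt (omega1 Δ) (omega2 Δ w) w := by
  have hz := zmem hw
  have hζ : 0 < zeta Δ ((w ^ 2)⁻¹) := zeta_pos hΔ hz
  have hsζ : 0 < Real.sqrt (zeta Δ ((w ^ 2)⁻¹)) := Real.sqrt_pos.2 hζ
  have hw0 : (0:ℝ) < w := lt_trans one_pos hw
  have hXs : 0 < Real.sqrt (1 - (1 - 2 * (w ^ 2)⁻¹) ^ 2) := Real.sqrt_pos.2 (sqX_pos hz)
  have hcomp : HasDerivAt (fun w : ℝ => zeta Δ ((w ^ 2)⁻¹))
      (zeta1 Δ ((w ^ 2)⁻¹) * (-(2 * w) / (w ^ 2) ^ 2)) w :=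
    (zeta_hasDerivAt Δ hz).comp (h₂ := zeta Δ) (h := fun w : ℝ => (w ^ 2)⁻¹) w (inner_hasDerivAt hw)
  have hsqrt := hcomp.sqrt (ne_of_gt hζ)
  have hX : HasDerivAt (fun w : ℝ => zeta1 Δ ((w ^ 2)⁻¹))
      ((-(4 * Δ) / (π * Real.sqrt (1 - (1 - 2 * (w ^ 2)⁻¹) ^ 2))) * (-(2 * w) / (w ^ 2) ^ 2)) w :=
    (zeta1_hasDerivAt Δ hz).comp (h₂ := zeta1 Δ) (h := fun w : ℝ => (w ^ 2)⁻¹) w (inner_hasDerivAt hw)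
  have hw3 : HasDerivAt (fun w : ℝ => w ^ 3) ((3:ℝ) * w ^ 2) w := by
    have := hasDerivAt_pow 3 w
    refine this.congr_deriv ?_; norm_num
  have hY := (hw3.mul hcomp).mul hsqrt
  have hY0 : w ^ 3 * zeta Δ ((w ^ 2)⁻¹) * Real.sqrt (zeta Δ ((w ^ 2)⁻¹)) ≠ 0 := by positivity
  have hdiv := hX.div hY hY0
  have ho1 : omega1 Δ = fun w => zeta1 Δ ((w ^ 2)⁻¹) /
      (w ^ 3 * zeta Δ ((w ^ 2)⁻¹) * Real.sqrt (zeta Δ ((w ^ 2)⁻¹))) := rfl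
  rw [ho1, omega2]
  refine hdiv.congr_deriv ?_
  simp only [Pi.mul_apply]
  set S := Real.sqrt (zeta Δ ((w ^ 2)⁻¹)) with hS
  set s := Real.sqrt (1 - (1 - 2 * (w ^ 2)⁻¹) ^ 2) with hs
  set Z1 := zeta1 Δ ((w ^ 2)⁻¹) with hZ1
  have hS2 : S ^ 2 = zeta Δ ((w ^ 2)⁻¹) := Real.sq_sqrt hζ.le
  rw [← hS2]
  have hπ := Real.pi_ne_zero
  field_simp
  ring

lemma omega2_nonneg {Δ w : ℝ} (hΔ : Δ ∈ Ioc (0:ℝ) 1) (hw : 1 < w) :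
    0 ≤ omega2 Δ w := by
  have hz := zmem hw
  have hζ : 0 < zeta Δ ((w ^ 2)⁻¹) := zeta_pos hΔ hz
  have hsζ : 0 < Real.sqrt (zeta Δ ((w ^ 2)⁻¹)) := Real.sqrt_pos.2 hζ
  have hw0 : (0:ℝ) < w := lt_trans one_pos hw
  have hXpos := sqX_pos hz
  have hXs : 0 < Real.sqrt (1 - (1 - 2 * (w ^ 2)⁻¹) ^ 2) := Real.sqrt_pos.2 hXpos
  rw [omega2]
  apply div_nonneg _ (sq_nonneg _)
  apply mul_nonneg hsζ.le
  -- reduce to the master inequality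
  set z : ℝ := (w ^ 2)⁻¹ with hzdef
  set θ := Real.arccos (1 - 2 * z) with hθdef
  have hθ := theta_mem hz
  have hcos := cos_arccos_z hz
  have hsin : Real.sqrt (1 - (1 - 2 * z) ^ 2) = Real.sin θ := (Real.sin_arccos _).symm
  have hsinpos : 0 < Real.sin θ := by rw [← hsin]; exact hXs
  have hζt : zeta Δ z = z - Δ * (1 / π) * (Real.sin θ - (1 - 2 * z) * θ) := by
    rw [zeta_eq_trig hz]
  have hζ1 : zeta1 Δ z = 1 - 2 * Δ / π * θ := rfl
  have hw2 : w ^ 2 = z⁻¹ := by rw [hzdef, inv_inv]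
  have hmaster := master hΔ.1 hΔ.2 hθ.1 hθ.2
  rw [hcos] at hmaster
  have hπ := Real.pi_pos
  have hz0 : 0 < z := hz.1
  -- the key algebraic identity
  have hid : z * Real.sin θ * π ^ 2 *
      (3 * zeta1 Δ z ^ 2
        + 8 * Δ * zeta Δ z / (π * Real.sqrt (1 - (1 - 2 * z) ^ 2))
        - 3 * w ^ 2 * zeta Δ z * zeta1 Δ z)
      = Δ * π * (3 * Real.sin θ ^ 2 - 3 * θ * Real.sin θ + 2 * (1 - (1 - 2 * z)) ^ 2)
        + Δ ^ 2 * (6 * θ * Real.sin θ * (θ - Real.sin θ)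
          - 4 * (1 - (1 - 2 * z)) * (Real.sin θ - θ * (1 - 2 * z))) := by
    rw [hsin, hζt, hζ1, hw2]
    field_simp
    ring
  have hpos : 0 < z * Real.sin θ * π ^ 2 := by positivity
  nlinarith [hmaster, hid, hpos]

lemma omega1_le_one {Δ w : ℝ} (hΔ : Δ ∈ Ioc (0:ℝ) 1) (hw : 1 < w) :
    omega1 Δ w ≤ 1 := by
  have hz := zmem hw
  have hζ : 0 < zeta Δ ((w ^ 2)⁻¹) := zeta_pos hΔ hz
  have hsζ : 0 < Real.sqrt (zeta Δ ((w ^ 2)⁻¹)) := Real.sqrt_pos.2 hζ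
  have hw0 : (0:ℝ) < w := lt_trans one_pos hw
  have hY : 0 < w ^ 3 * zeta Δ ((w ^ 2)⁻¹) * Real.sqrt (zeta Δ ((w ^ 2)⁻¹)) := by positivity
  rw [omega1]
  rcases le_or_gt (zeta1 Δ ((w ^ 2)⁻¹)) 0 with h0 | h0
  · have := div_nonpos_of_nonpos_of_nonneg h0 hY.le
    linarith
  · rw [div_le_one hY]
    set z : ℝ := (w ^ 2)⁻¹ with hzdef
    set Z1 := zeta1 Δ z with hZ1
    set ζ := zeta Δ z with hζdef
    set S := Real.sqrt ζ with hS
    have hS2 : S ^ 2 = ζ := Real.sq_sqrt hζ.le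
    have h1 : Z1 ≤ 1 := zeta1_le_one hΔ hz
    have hge : z * (1 + 2 * Z1) ≤ 3 * ζ := zeta_ge hΔ hz
    have hz0 : 0 < z := hz.1
    have hq : 27 * Z1 ^ 2 ≤ (1 + 2 * Z1) ^ 3 := by nlinarith [sq_nonneg (Z1 - 1), h0]
    have hcube : (z * (1 + 2 * Z1)) ^ 3 ≤ (3 * ζ) ^ 3 := by
      apply pow_le_pow_left₀ _ hge
      positivity
    have hkey : Z1 ^ 2 * z ^ 3 ≤ ζ ^ 3 := by nlinarith [pow_pos hz0 3]
    have hw6 : w ^ 6 * z ^ 3 = 1 := by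
      rw [hzdef]
      field_simp
    have hY2 : (w ^ 3 * ζ * S) ^ 2 * z ^ 3 = ζ ^ 3 := by
      have he : (w ^ 3 * ζ * S) ^ 2 = w ^ 6 * ζ ^ 2 * S ^ 2 := by ring
      rw [he, hS2]
      linear_combination ζ ^ 3 * hw6
    have hsq : Z1 ^ 2 ≤ (w ^ 3 * ζ * S) ^ 2 := by nlinarith [pow_pos hz0 3]
    nlinarith [hY, h0, hsq]

/-- `ω` is convex on `(1,∞)` and `ω'(w) ≤ 1` there. -/
theorem omega_convex_deriv_le_one (Δ : ℝ) (hΔ : Δ ∈ Set.Ioc (0 : ℝ) 1) :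
    ConvexOn ℝ (Set.Ioi (1 : ℝ)) (omegaMap Δ) ∧
    ∀ w ∈ Set.Ioi (1 : ℝ), deriv (omegaMap Δ) w ≤ 1 := by
  constructor
  · apply convexOn_of_hasDerivWithinAt2_nonneg (convex_Ioi 1)
      (f' := omega1 Δ) (f'' := omega2 Δ)
    · intro x hx
      exact (omega_hasDerivAt hΔ hx).continuousAt.continuousWithinAt
    · intro x hx
      rw [interior_Ioi] at hx ⊢
      exact (omega_hasDerivAt hΔ hx).hasDerivWithinAt
    · intro x hx
      rw [interior_Ioi] at hx ⊢
      exact (omega1_hasDerivAt hΔ hx).hasDerivWithinAt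
    · intro x hx
      rw [interior_Ioi] at hx
      exact omega2_nonneg hΔ hx
  · intro w hw
    rw [(omega_hasDerivAt hΔ hw).deriv]
    exact omega1_le_one hΔ hw
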